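/- Let Y and X be locally compact Hausdorff spaces, G a group acting on Y and on X by homeomorphisms with the action on X faithful, and f : Y → X a perfect continuous surjection which is equivariant (f(g·y) = g·f(y) for all g ∈ G, y ∈ Y). Let F : 2^{Y×Y} → 2^{X×X}, F(A) = (f × f)(A), be the induced map of Fell hyperspaces, and let ι_Y(g) = Γ_Y(g) ⊆ Y × Y and ι_X(g) = Γ_X(g) ⊆ X × X be the graph maps of the two actions. Assume G carries a topology for which ι_Y : G → (2^{Y×Y}, τ_F) is a topological embedding. Then ι_X : G → (2^{X×X}, τ_F) is a topological embedding if and only if the following condition (PM) holds: for every g ∈ G and every R in the closure of ι_Y(G) in (2^{Y×Y}, τ_F), F(Γ_Y(g)) = F(R) implies Γ_Y(g) = R. -/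
import Mathlib


open Topology

/-- The hyperspace of closed subsets of a topological space (including `∅`). -/
abbrev HClosed (Z : Type*) [TopologicalSpace Z] := {A : Set Z // IsClosed A}

/-- The Fell topology on the hyperspace of closed subsets: generated by the sets
`{A | A ∩ W ≠ ∅}` for `W` open and `{A | A ∩ K = ∅}` for `K` compact. -/
def fellTop (Z : Type*) [TopologicalSpace Z] : TopologicalSpace (HClosed Z) :=
  TopologicalSpace.generateFrom
    ({s | ∃ W : Set Z, IsOpen W ∧ s = {A : HClosed Z | ((A : Set Z) ∩ W).Nonempty}} ∪
     {s | ∃ K : Set Z, IsCompact K ∧ s = {A : HClosed Z | (A : Set Z) ∩ K = ∅}})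

section Aux

open Filter TopologicalSpace Set

/-- The Fell topology on the hyperspace is always compact. -/
lemma fell_compactSpace {Z : Type*} [TopologicalSpace Z] :
    @CompactSpace (HClosed Z) (fellTop Z) := by
  letI := fellTop Z
  refine ⟨?_⟩
  rw [isCompact_iff_ultrafilter_le_nhds]
  intro U _
  set A : Set Z := {z | ∀ W : Set Z, IsOpen W → z ∈ W →
    {F : HClosed Z | ((F : Set Z) ∩ W).Nonempty} ∈ U} with hAdef
  have hA : IsClosed A := by
    rw [← isOpen_compl_iff, isOpen_iff_forall_mem_open]
    intro z hz
    simp only [hAdef, mem_compl_iff, mem_setOf_eq, not_forall] at hz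
    obtain ⟨W, hW, hzW, hWU⟩ := hz
    exact ⟨W, fun w hw hwA => hWU (hwA W hW hw), hW, hzW⟩
  refine ⟨⟨A, hA⟩, trivial, ?_⟩
  have : @nhds (HClosed Z) (fellTop Z) ⟨A, hA⟩ =
      ⨅ s ∈ {s | (⟨A, hA⟩ : HClosed Z) ∈ s ∧ s ∈
        ({s | ∃ W : Set Z, IsOpen W ∧ s = {B : HClosed Z | ((B : Set Z) ∩ W).Nonempty}} ∪
         {s | ∃ K : Set Z, IsCompact K ∧ s = {B : HClosed Z | (B : Set Z) ∩ K = ∅}})}, 𝓟 s :=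
    nhds_generateFrom
  rw [this, le_iInf₂_iff]
  rintro s ⟨hAs, hs | hs⟩
  · obtain ⟨W, hW, rfl⟩ := hs
    rw [Filter.le_principal_iff]
    obtain ⟨z, hzA, hzW⟩ := hAs
    exact hzA W hW hzW
  · obtain ⟨K, hK, rfl⟩ := hs
    rw [Filter.le_principal_iff]
    -- every point of K has an open nbhd W with {F | F ∩ W = ∅} ∈ U
    have hpt : ∀ z ∈ K, ∃ W : Set Z, IsOpen W ∧ z ∈ W ∧
        {F : HClosed Z | (F : Set Z) ∩ W = ∅} ∈ U := by
      intro z hzK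
      have hzA : z ∉ A := fun hzA => by
        have : z ∈ (A : Set Z) ∩ K := ⟨hzA, hzK⟩
        rw [hAs] at this; exact this
      simp only [hAdef, mem_setOf_eq, not_forall] at hzA
      obtain ⟨W, hW, hzW, hWU⟩ := hzA
      refine ⟨W, hW, hzW, ?_⟩
      have := (Ultrafilter.compl_mem_iff_notMem (s := {F : HClosed Z |
        ((F : Set Z) ∩ W).Nonempty}) (f := U)).mpr hWU
      convert this using 1
      ext F
      simp [Set.not_nonempty_iff_eq_empty]
    choose W hWo hWz hWU using hpt
    obtain ⟨t, ht⟩ := hK.elim_nhds_subcover' (fun z hz => W z hz)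
      (fun z hz => (hWo z hz).mem_nhds (hWz z hz))
    have hmem : (⋂ z ∈ t, {F : HClosed Z | (F : Set Z) ∩ W z.1 z.2 = ∅}) ∈ U := by
      exact (Filter.biInter_finset_mem t).mpr fun z _ => hWU z.1 z.2
    refine Filter.mem_of_superset hmem ?_
    intro F hF
    simp only [Set.mem_iInter, Set.mem_setOf_eq] at hF ⊢
    rw [Set.eq_empty_iff_forall_notMem]
    rintro w ⟨hwF, hwK⟩
    obtain ⟨z, hzt, hw⟩ := Set.mem_iUnion₂.mp (ht hwK)
    have hz := hF z hzt
    have : w ∈ (F : Set Z) ∩ W z.1 z.2 := ⟨hwF, hw⟩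
    rw [hz] at this
    exact this

/-- The Fell topology is Hausdorff when the base space is locally compact Hausdorff. -/
lemma fell_t2Space {Z : Type*} [TopologicalSpace Z] [T2Space Z] [LocallyCompactSpace Z] :
    @T2Space (HClosed Z) (fellTop Z) := by
  letI := fellTop Z
  have key : ∀ (A B : HClosed Z) (z : Z), z ∈ (A : Set Z) → z ∉ (B : Set Z) →
      ∃ u v : Set (HClosed Z), IsOpen u ∧ IsOpen v ∧ A ∈ u ∧ B ∈ v ∧ Disjoint u v := by
    intro A B z hzA hzB
    have hnB : (B : Set Z)ᶜ ∈ 𝓝 z := B.2.isOpen_compl.mem_nhds hzB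
    obtain ⟨K, hKn, hKB, hKc⟩ := local_compact_nhds hnB
    refine ⟨{F : HClosed Z | ((F : Set Z) ∩ interior K).Nonempty},
      {F : HClosed Z | (F : Set Z) ∩ K = ∅}, ?_, ?_, ?_, ?_, ?_⟩
    · exact isOpen_generateFrom_of_mem (Or.inl ⟨interior K, isOpen_interior, rfl⟩)
    · exact isOpen_generateFrom_of_mem (Or.inr ⟨K, hKc, rfl⟩)
    · exact ⟨z, hzA, mem_interior_iff_mem_nhds.mpr hKn⟩
    · show (B : Set Z) ∩ K = ∅
      rw [Set.eq_empty_iff_forall_notMem]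
      exact fun w hw => hKB hw.2 hw.1
    · rw [Set.disjoint_left]
      rintro F ⟨w, hwF, hwK⟩ hF
      have : w ∈ (F : Set Z) ∩ K := ⟨hwF, interior_subset hwK⟩
      rw [hF] at this; exact this
  constructor
  intro A B hAB
  by_cases h : (A : Set Z) ⊆ (B : Set Z)
  · have h2 : ¬ (B : Set Z) ⊆ (A : Set Z) := fun h2 => hAB (Subtype.ext (h.antisymm h2))
    obtain ⟨z, hzB, hzA⟩ := Set.not_subset.mp h2
    obtain ⟨u, v, hu, hv, hBu, hAv, huv⟩ := key B A z hzB hzA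
    exact ⟨v, u, hv, hu, hAv, hBu, huv.symm⟩
  · obtain ⟨z, hzA, hzB⟩ := Set.not_subset.mp h
    exact key A B z hzA hzB

end Aux

section Aux2
open Filter TopologicalSpace Set

/-- The map induced on Fell hyperspaces by a proper map is continuous. -/
lemma fell_map_continuous {A B : Type*} [TopologicalSpace A] [TopologicalSpace B]
    {h : A → B} (hp : IsProperMap h) (F : HClosed A → HClosed B)
    (hF : ∀ S : HClosed A, (F S : Set B) = h '' (S : Set A)) :
    @Continuous _ _ (fellTop A) (fellTop B) F := by
  letI := fellTop A
  rw [show fellTop B = TopologicalSpace.generateFrom _ from rfl, continuous_generateFrom_iff]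
  rintro s (⟨W, hW, rfl⟩ | ⟨K, hK, rfl⟩)
  · have : F ⁻¹' {T : HClosed B | ((T : Set B) ∩ W).Nonempty} =
        {S : HClosed A | ((S : Set A) ∩ h ⁻¹' W).Nonempty} := by
      ext S
      simp only [mem_preimage, mem_setOf_eq, hF, ← Set.image_inter_preimage,
        Set.image_nonempty]
    rw [this]
    exact isOpen_generateFrom_of_mem (Or.inl ⟨h ⁻¹' W, hW.preimage hp.continuous, rfl⟩)
  · have : F ⁻¹' {T : HClosed B | (T : Set B) ∩ K = ∅} =
        {S : HClosed A | (S : Set A) ∩ h ⁻¹' K = ∅} := by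
      ext S
      simp only [mem_preimage, mem_setOf_eq, hF, ← Set.image_inter_preimage,
        Set.image_eq_empty]
    rw [this]
    exact isOpen_generateFrom_of_mem (Or.inr ⟨h ⁻¹' K, hp.isCompact_preimage hK, rfl⟩)

end Aux2



/-- For a perfect equivariant continuous surjection `f : Y → X` of locally compact Hausdorff
`G`-spaces (the action on `X` being faithful), the graph map `ι_X` into the Fell hyperspace of
`X × X` is a topological embedding iff condition (PM) holds: for every `g ∈ G` and every `R` in
the closure of the graphs in the Fell hyperspace of `Y × Y`, `F(Γ_Y(g)) = F(R)` implies
`Γ_Y(g) = R`. -/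
theorem stmt_8 {Y X G : Type*} [TopologicalSpace Y] [T2Space Y] [LocallyCompactSpace Y]
    [TopologicalSpace X] [T2Space X] [LocallyCompactSpace X]
    [Group G] [MulAction G Y] [MulAction G X] [FaithfulSMul G X]
    (hgY : ∀ g : G, Continuous fun y : Y => g • y)
    (hgX : ∀ g : G, Continuous fun x : X => g • x)
    (f : Y → X) (hfc : Continuous f) (hfcl : IsClosedMap f)
    (hfib : ∀ x : X, IsCompact (f ⁻¹' {x})) (hfs : Function.Surjective f)
    (hequiv : ∀ (g : G) (y : Y), f (g • y) = g • f y)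
    (F : HClosed (Y × Y) → HClosed (X × X))
    (hF : ∀ A : HClosed (Y × Y),
      (F A : Set (X × X)) = (fun p : Y × Y => (f p.1, f p.2)) '' (A : Set (Y × Y)))
    (ιY : G → HClosed (Y × Y))
    (hιY : ∀ g : G, (ιY g : Set (Y × Y)) = {p : Y × Y | p.2 = g • p.1})
    (ιX : G → HClosed (X × X))
    (hιX : ∀ g : G, (ιX g : Set (X × X)) = {p : X × X | p.2 = g • p.1})
    (τ : TopologicalSpace G)
    (hemb : @IsEmbedding _ _ τ (fellTop (Y × Y)) ιY) :
    @IsEmbedding _ _ τ (fellTop (X × X)) ιX ↔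
      ∀ g : G, ∀ R ∈ @closure _ (fellTop (Y × Y)) (Set.range ιY),
        F (ιY g) = F R → ιY g = R := by
  letI := τ
  letI : TopologicalSpace (HClosed (Y × Y)) := fellTop (Y × Y)
  letI : TopologicalSpace (HClosed (X × X)) := fellTop (X × X)
  haveI : CompactSpace (HClosed (Y × Y)) := fell_compactSpace
  haveI : T2Space (HClosed (Y × Y)) := fell_t2Space
  haveI : T2Space (HClosed (X × X)) := fell_t2Space
  have hfp : IsProperMap f := isProperMap_iff_isClosedMap_and_compact_fibers.mpr ⟨hfc, hfcl, hfib⟩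
  have hffp : IsProperMap (fun p : Y × Y => (f p.1, f p.2)) := hfp.prodMap hfp
  have hFc : Continuous F := fell_map_continuous hffp F hF
  have hcomp : ∀ g : G, ιX g = F (ιY g) := by
    intro g
    apply Subtype.ext
    rw [hιX, hF, hιY]
    ext ⟨a, b⟩
    simp only [Set.mem_setOf_eq, Set.mem_image, Prod.mk.injEq]
    constructor
    · rintro hb
      obtain ⟨y, rfl⟩ := hfs a
      exact ⟨(y, g • y), rfl, rfl, by rw [hequiv, ← hb]⟩
    · rintro ⟨⟨y1, y2⟩, hy, rfl, rfl⟩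
      simp only [Set.mem_setOf_eq] at hy
      rw [hy, hequiv]
  have hFιY : F ∘ ιY = ιX := funext fun g => (hcomp g).symm
  have hιXc : Continuous ιX := hFιY ▸ hFc.comp hemb.continuous
  constructor
  · intro hX g R hR hFR
    rw [mem_closure_iff_ultrafilter] at hR
    obtain ⟨U, hrange, hU⟩ := hR
    set V := Filter.comap ιY (U : Filter (HClosed (Y × Y))) with hV
    have hmap : Filter.map ιY V = U := Filter.map_comap_of_mem hrange
    haveI hVne : V.NeBot := Filter.NeBot.of_map (hmap ▸ U.neBot)
    have h1 : Filter.map ιX V ≤ nhds (ιX g) := by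
      have heq : Filter.map ιX V = Filter.map F (U : Filter (HClosed (Y × Y))) := by
        rw [← hmap, Filter.map_map, hFιY]
      rw [heq, hcomp g, hFR]
      exact (Filter.map_mono hU).trans (hFc.tendsto R)
    have h2 : V ≤ nhds g := by
      rw [hX.toIsInducing.nhds_eq_comap g]
      exact Filter.map_le_iff_le_comap.mp h1
    have h3 : (U : Filter (HClosed (Y × Y))) ≤ nhds (ιY g) := by
      rw [← hmap]
      exact (Filter.map_mono h2).trans (hemb.continuous.tendsto g)
    exact eq_of_nhds_neBot (Filter.neBot_of_le (le_inf h3 hU))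
  · intro hPM
    refine ⟨?_, ?_⟩
    · rw [isInducing_iff_nhds]
      intro g
      refine le_antisymm ((hιXc.tendsto g).le_comap) ?_
      rw [Filter.le_iff_ultrafilter]
      intro V hV
      obtain ⟨R, -, hUR⟩ := isCompact_iff_ultrafilter_le_nhds.mp CompactSpace.isCompact_univ
        (V.map ιY) (Filter.le_principal_iff.mpr Filter.univ_mem)
      have hRcl : R ∈ closure (Set.range ιY) :=
        mem_closure_iff_ultrafilter.mpr ⟨V.map ιY, Filter.range_mem_map, hUR⟩
      have hmX : Filter.map ιX (V : Filter G) ≤ nhds (ιX g) :=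
        Filter.map_le_iff_le_comap.mpr hV
      have hFRs : F (ιY g) = F R := by
        have hmapF : Filter.map F ((V.map ιY : Ultrafilter _) : Filter _) ≤ nhds (F R) :=
          (Filter.map_mono hUR).trans (hFc.tendsto R)
        have hmapX : Filter.map F ((V.map ιY : Ultrafilter _) : Filter _) ≤
            nhds (F (ιY g)) := by
          rw [show ((V.map ιY : Ultrafilter _) : Filter _) =
            Filter.map ιY (V : Filter G) from rfl, Filter.map_map, hFιY, ← hcomp g]
          exact hmX
        exact eq_of_nhds_neBot (Filter.neBot_of_le (le_inf hmapX hmapF))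
      have hRg : ιY g = R := hPM g R hRcl hFRs
      rw [hemb.toIsInducing.nhds_eq_comap g]
      refine Filter.map_le_iff_le_comap.mp ?_
      rw [show Filter.map ιY (V : Filter G) =
        ((V.map ιY : Ultrafilter _) : Filter _) from rfl, hRg]
      exact hUR
    · intro g h hgh
      refine eq_of_smul_eq_smul (α := X) fun x => ?_
      have h1 : ((x, g • x) : X × X) ∈ (ιX g : Set (X × X)) := by rw [hιX]; exact rfl
      rw [hgh, hιX] at h1
      exact h1
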